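/- Let H₁, H₂, H₃ be real Hilbert spaces, D₁ : H₁ → H₃ and D₂ : H₂ → H₃ nonzero bounded linear operators with adjoints D₁*, D₂*, L₁ := ‖D₁‖², L₂ := ‖D₂‖², and L ≥ 1. Let T₁ : H₁ → H₁, T₂ : H₂ → H₂ be L-Lipschitz quasi-pseudocontractive mappings with nonempty fixed point sets and T₁ − I, T₂ − I demiclosed at zero. Let (η_n), (ζ_n) satisfy 0 < η̲ ≤ η_n < ζ_n ≤ ζ̄ < 1/(1+√(1+L²)), let 0 < a ≤ α_n ≤ b < 1, and 0 < c ≤ τ_n ≤ d < 2/(L₁+L₂) for all n. Given (x₀, y₀) ∈ H₁ × H₂, define v_n = x_n + τ_n D₁*(D₂ y_n − D₁ x_n), x_{n+1} = α_n x_n + (1−α_n)[(1−η_n)I + η_n T₁((1−ζ_n)I + ζ_n T₁)] v_n, w_n = y_n + τ_n D₂*(D₁ x_n − D₂ y_n), y_{n+1} = α_n y_n + (1−α_n)[(1−η_n)I + η_n T₂((1−ζ_n)I + ζ_n T₂)] w_n. If Γ := {(x, y) : T₁x = x, T₂y = y, D₁x = D₂y} is nonempty, then (x_n, y_n) converges weakly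 to some (x*, y*) ∈ Γ. -/

import Mathlib

open scoped RealInnerProductSpace
open Filter

section Aux
variable {H : Type*} [NormedAddCommGroup H] [InnerProductSpace ℝ H]

lemma norm_combo_sq (t : ℝ) (a b : H) :
    ‖(1-t) • a + t • b‖^2 = (1-t)*‖a‖^2 + t*‖b‖^2 - t*(1-t)*‖a-b‖^2 := by
  have h1 : ∀ v : H, ‖v‖^2 = ⟪v, v⟫ := fun v => (real_inner_self_eq_norm_sq v).symm
  rw [h1, h1, h1, h1]
  simp only [inner_add_left, inner_add_right, inner_sub_left, inner_sub_right,
    real_inner_smul_left, real_inner_smul_right]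
  rw [real_inner_comm b a]
  ring

lemma key_op (T : H → H) (L : ℝ) (hL : 1 ≤ L)
    (hlip : ∀ x y, ‖T x - T y‖ ≤ L * ‖x - y‖)
    (hqpc : ∀ x p, T p = p → ‖T x - p‖^2 ≤ ‖x - p‖^2 + ‖x - T x‖^2)
    (η ζ : ℝ) (hη : 0 < η) (hηζ : η < ζ) (hζ : ζ < 1/(1 + Real.sqrt (1 + L^2)))
    (x p : H) (hp : T p = p) :
    ‖(1-η) • x + η • T ((1-ζ) • x + ζ • T x) - p‖^2
      ≤ ‖x - p‖^2 - η*ζ*(1 - 2*ζ - ζ^2*L^2)*‖x - T x‖^2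
        - η*(ζ-η)*‖x - T ((1-ζ) • x + ζ • T x)‖^2 := by
  have hζ0 : 0 < ζ := lt_trans hη hηζ
  obtain ⟨G, hG⟩ : ∃ G : H, G = (1-ζ) • x + ζ • T x := ⟨_, rfl⟩
  obtain ⟨u, hu⟩ : ∃ u : H, u = T G := ⟨_, rfl⟩
  rw [← hG, ← hu]
  have e0 : (1-η) • x + η • u - p = (1-η) • (x - p) + η • (u - p) := by module
  have e1 : ‖(1-η) • x + η • u - p‖^2
      = (1-η)*‖x-p‖^2 + η*‖u-p‖^2 - η*(1-η)*‖x-u‖^2 := by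
    rw [e0, norm_combo_sq, show (x-p)-(u-p) = x - u from by module]
  have e2 : G - p = (1-ζ) • (x - p) + ζ • (T x - p) := by rw [hG]; module
  have e3 : ‖G - p‖^2 = (1-ζ)*‖x-p‖^2 + ζ*‖T x - p‖^2 - ζ*(1-ζ)*‖x - T x‖^2 := by
    rw [e2, norm_combo_sq, show (x-p)-(T x-p) = x - T x from by module]
  have e4 : ‖T x - p‖^2 ≤ ‖x - p‖^2 + ‖x - T x‖^2 := hqpc x p hp
  have e5 : ‖G - p‖^2 ≤ ‖x-p‖^2 + ζ^2*‖x - T x‖^2 := by nlinarith [sq_nonneg ‖x - T x‖]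
  have e6 : G - u = (1-ζ) • (x - u) + ζ • (T x - u) := by rw [hG]; module
  have e7 : ‖G - u‖^2 = (1-ζ)*‖x-u‖^2 + ζ*‖T x - u‖^2 - ζ*(1-ζ)*‖x - T x‖^2 := by
    rw [e6, norm_combo_sq, show (x-u)-(T x-u) = x - T x from by module]
  have e8 : ‖T x - u‖ ≤ L * ζ * ‖x - T x‖ := by
    have h := hlip x G
    have hxG : x - G = ζ • (x - T x) := by rw [hG]; module
    rw [hxG, norm_smul] at h
    simp only [Real.norm_eq_abs, abs_of_pos hζ0] at h
    calc ‖T x - u‖ = ‖T x - T G‖ := by rw [hu]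
      _ ≤ L * (ζ * ‖x - T x‖) := h
      _ = L * ζ * ‖x - T x‖ := by ring
  have e8' : ‖T x - u‖^2 ≤ L^2 * ζ^2 * ‖x - T x‖^2 := by
    have h0 : 0 ≤ ‖T x - u‖ := norm_nonneg _
    nlinarith
  have e9 : ‖u - p‖^2 ≤ ‖G - p‖^2 + ‖G - u‖^2 := by
    have h := hqpc G p hp
    rw [← hu] at h
    exact h
  have e10 : ‖u - p‖^2 ≤ ‖x-p‖^2 + ζ^2*‖x - T x‖^2 + (1-ζ)*‖x-u‖^2
      + ζ^3*L^2*‖x - T x‖^2 - ζ*(1-ζ)*‖x - T x‖^2 := by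
    have h1 := mul_le_mul_of_nonneg_left e8' hζ0.le
    linarith [e9, e5, e7]
  rw [e1]
  linarith [mul_le_mul_of_nonneg_left e10 hη.le]

lemma weak_seq_compact [CompleteSpace H] (u : ℕ → H) (R : ℝ) (hR : ∀ n, ‖u n‖ ≤ R) :
    ∃ φ : ℕ → ℕ, StrictMono φ ∧ ∃ z : H,
      ∀ h : H, Tendsto (fun n => ⟪u (φ n), h⟫) atTop (nhds ⟪z, h⟫) := by
  have hR0 : 0 ≤ R := le_trans (norm_nonneg (u 0)) (hR 0)
  set s : Set (ℕ → ℝ) := Set.pi Set.univ (fun m => Set.Icc (-(R*‖u m‖)) (R*‖u m‖)) with hs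
  have hsc : IsCompact s := isCompact_univ_pi fun m => isCompact_Icc
  have hmem : ∀ n, (fun m => ⟪u n, u m⟫) ∈ s := by
    intro n m _
    have h1 : |⟪u n, u m⟫| ≤ ‖u n‖ * ‖u m‖ := abs_real_inner_le_norm _ _
    have h2 : ‖u n‖ * ‖u m‖ ≤ R * ‖u m‖ :=
      mul_le_mul_of_nonneg_right (hR n) (norm_nonneg _)
    exact abs_le.mp (h1.trans h2)
  obtain ⟨g, -, φ, hφ, hconv⟩ := hsc.tendsto_subseq hmem
  have hcoord : ∀ m, Tendsto (fun n => ⟪u (φ n), u m⟫) atTop (nhds (g m)) := by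
    intro m
    exact (tendsto_pi_nhds.mp hconv) m
  set C : Set H := {h | ∃ l, Tendsto (fun n => ⟪u (φ n), h⟫) atTop (nhds l)} with hC
  have hrange : ∀ m, u m ∈ C := fun m => ⟨g m, hcoord m⟩
  have hspan : ∀ h ∈ Submodule.span ℝ (Set.range u), h ∈ C := by
    intro h hh
    induction hh using Submodule.span_induction with
    | mem x hx => obtain ⟨m, rfl⟩ := hx; exact hrange m
    | zero => exact ⟨0, by simp⟩
    | add x y _ _ hx hy =>
        obtain ⟨l1, h1⟩ := hx; obtain ⟨l2, h2⟩ := hy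
        exact ⟨l1 + l2, by simpa [inner_add_right] using h1.add h2⟩
    | smul a x _ hx =>
        obtain ⟨l, h1⟩ := hx
        exact ⟨a * l, by simpa [real_inner_smul_right] using h1.const_mul a⟩
  have hclosure : ∀ h ∈ closure (Submodule.span ℝ (Set.range u) : Set H), h ∈ C := by
    intro h hh
    have hcau : CauchySeq (fun n => ⟪u (φ n), h⟫) := by
      rw [Metric.cauchySeq_iff]
      intro ε hε
      have hε3 : 0 < ε / 3 / (R + 1) := by positivity
      obtain ⟨v, hv, hvd⟩ := Metric.mem_closure_iff.mp hh _ hε3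
      obtain ⟨l, hl⟩ := hspan v hv
      have hcv : CauchySeq (fun n => ⟪u (φ n), v⟫) := hl.cauchySeq
      obtain ⟨N, hN⟩ := Metric.cauchySeq_iff.mp hcv (ε/3) (by linarith)
      refine ⟨N, fun m hm n hn => ?_⟩
      have key : ∀ k, |⟪u (φ k), h⟫ - ⟪u (φ k), v⟫| ≤ ε / 3 := by
        intro k
        rw [← inner_sub_right]
        calc |⟪u (φ k), h - v⟫| ≤ ‖u (φ k)‖ * ‖h - v‖ := abs_real_inner_le_norm _ _
          _ ≤ (R+1) * ‖h - v‖ := by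
              apply mul_le_mul_of_nonneg_right _ (norm_nonneg _)
              linarith [hR (φ k)]
          _ ≤ (R+1) * (ε / 3 / (R + 1)) := by
              apply mul_le_mul_of_nonneg_left _ (by linarith)
              rw [← dist_eq_norm]; exact le_of_lt hvd
          _ = ε / 3 := by field_simp
      have hmn := hN m hm n hn
      rw [Real.dist_eq] at hmn ⊢
      have k1 := key m; have k2 := key n
      have heq : ⟪u (φ m), h⟫ - ⟪u (φ n), h⟫ =
        (⟪u (φ m), h⟫ - ⟪u (φ m), v⟫) + (⟪u (φ m), v⟫ - ⟪u (φ n), v⟫)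
          + (⟪u (φ n), v⟫ - ⟪u (φ n), h⟫) := by ring
      rw [heq]
      calc _ ≤ |⟪u (φ m), h⟫ - ⟪u (φ m), v⟫| + |⟪u (φ m), v⟫ - ⟪u (φ n), v⟫|
              + |⟪u (φ n), v⟫ - ⟪u (φ n), h⟫| := by
            exact (abs_add_three _ _ _)
        _ < ε := by
            have := abs_sub_comm (⟪u (φ n), v⟫) (⟪u (φ n), h⟫)
            rw [this] at *
            linarith [abs_sub_comm (⟪u (φ n), h⟫) (⟪u (φ n), v⟫)]
    obtain ⟨l, hl⟩ := cauchySeq_tendsto_of_complete hcau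
    exact ⟨l, hl⟩
  set K : Submodule ℝ H := (Submodule.span ℝ (Set.range u)).topologicalClosure with hK
  have hKc : CompleteSpace K :=
    (Submodule.isClosed_topologicalClosure _).completeSpace_coe
  have hall : ∀ h : H, ∃ l, Tendsto (fun n => ⟪u (φ n), h⟫) atTop (nhds l) := by
    intro h
    have hp : ((K.orthogonalProjectionOnto h : K) : H) ∈ C := by
      apply hclosure
      have hcoe : (K : Set H) = closure ((Submodule.span ℝ (Set.range u) : Submodule ℝ H) : Set H) :=
        Submodule.topologicalClosure_coe _
      rw [← hcoe]
      exact SetLike.coe_mem _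
    obtain ⟨l, hl⟩ := hp
    refine ⟨l, ?_⟩
    have heq : ∀ n, ⟪u (φ n), h⟫ = ⟪u (φ n), ((K.orthogonalProjectionOnto h : K) : H)⟫ := by
      intro n
      have hmemK : u (φ n) ∈ K := by
        apply Submodule.le_topologicalClosure
        exact Submodule.subset_span ⟨φ n, rfl⟩
      have hz : ⟪u (φ n), h - ((K.orthogonalProjectionOnto h : K) : H)⟫ = 0 :=
        (Submodule.sub_starProjection_mem_orthogonal (K := K) h) (u (φ n)) hmemK
      rw [inner_sub_right] at hz
      linarith
    simpa [heq] using hl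
  choose c hc using hall
  have hadd : ∀ h1 h2, c (h1 + h2) = c h1 + c h2 := by
    intro h1 h2
    refine tendsto_nhds_unique (hc (h1 + h2)) ?_
    simpa [inner_add_right] using (hc h1).add (hc h2)
  have hsmul : ∀ (a : ℝ) h, c (a • h) = a * c h := by
    intro a h
    refine tendsto_nhds_unique (hc (a • h)) ?_
    simpa [real_inner_smul_right] using (hc h).const_mul a
  have hbound : ∀ h, |c h| ≤ R * ‖h‖ := by
    intro h
    have habs : Tendsto (fun n => |⟪u (φ n), h⟫|) atTop (nhds |c h|) := (hc h).abs
    refine le_of_tendsto habs (Eventually.of_forall fun n => ?_)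
    exact (abs_real_inner_le_norm _ _).trans
      (mul_le_mul_of_nonneg_right (hR (φ n)) (norm_nonneg _))
  let f : H →ₗ[ℝ] ℝ :=
    { toFun := c, map_add' := hadd, map_smul' := hsmul }
  let fc : H →L[ℝ] ℝ := f.mkContinuous R (fun h => by
    rw [Real.norm_eq_abs]; exact hbound h)
  refine ⟨φ, hφ, (InnerProductSpace.toDual ℝ H).symm fc, fun h => ?_⟩
  have hzz : ⟪(InnerProductSpace.toDual ℝ H).symm fc, h⟫ = fc h :=
    InnerProductSpace.toDual_symm_apply
  rw [hzz]
  exact hc h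

end Aux

set_option maxHeartbeats 3200000 in
/-- Corollary (Chang et al.): weak convergence of the relaxed split equality fixed
point algorithm with variable parameters `η n`, `ζ n`. -/
theorem sefpp_weak_convergence_chang
    {H₁ H₂ H₃ : Type*}
    [NormedAddCommGroup H₁] [InnerProductSpace ℝ H₁] [CompleteSpace H₁]
    [NormedAddCommGroup H₂] [InnerProductSpace ℝ H₂] [CompleteSpace H₂]
    [NormedAddCommGroup H₃] [InnerProductSpace ℝ H₃] [CompleteSpace H₃]
    (D₁ : H₁ →L[ℝ] H₃) (D₂ : H₂ →L[ℝ] H₃)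
    (hD₁ : D₁ ≠ 0) (hD₂ : D₂ ≠ 0)
    (L₁ L₂ : ℝ) (hL₁ : L₁ = ‖D₁‖ ^ 2) (hL₂ : L₂ = ‖D₂‖ ^ 2)
    (L : ℝ) (hL : 1 ≤ L)
    (T₁ : H₁ → H₁) (T₂ : H₂ → H₂)
    (hT₁lip : ∀ x y : H₁, ‖T₁ x - T₁ y‖ ≤ L * ‖x - y‖)
    (hT₂lip : ∀ x y : H₂, ‖T₂ x - T₂ y‖ ≤ L * ‖x - y‖)
    (hT₁qpc : ∀ (x p : H₁), T₁ p = p → ‖T₁ x - p‖ ^ 2 ≤ ‖x - p‖ ^ 2 + ‖x - T₁ x‖ ^ 2)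
    (hT₂qpc : ∀ (y q : H₂), T₂ q = q → ‖T₂ y - q‖ ^ 2 ≤ ‖y - q‖ ^ 2 + ‖y - T₂ y‖ ^ 2)
    (hFix₁ : ∃ p, T₁ p = p) (hFix₂ : ∃ q, T₂ q = q)
    (hT₁dem : ∀ (u : ℕ → H₁) (z : H₁),
      (∀ h : H₁, Filter.Tendsto (fun n => ⟪u n, h⟫) Filter.atTop (nhds ⟪z, h⟫)) →
      Filter.Tendsto (fun n => ‖u n - T₁ (u n)‖) Filter.atTop (nhds 0) → T₁ z = z)
    (hT₂dem : ∀ (u : ℕ → H₂) (z : H₂),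
      (∀ h : H₂, Filter.Tendsto (fun n => ⟪u n, h⟫) Filter.atTop (nhds ⟪z, h⟫)) →
      Filter.Tendsto (fun n => ‖u n - T₂ (u n)‖) Filter.atTop (nhds 0) → T₂ z = z)
    (ηlo ζhi : ℝ) (hηlo : 0 < ηlo) (hζhi : ζhi < 1 / (1 + Real.sqrt (1 + L ^ 2)))
    (η ζ : ℕ → ℝ)
    (hηζ : ∀ n, ηlo ≤ η n ∧ η n < ζ n ∧ ζ n ≤ ζhi)
    (a b c d : ℝ) (ha : 0 < a) (hb : b < 1) (hc : 0 < c) (hd : d < 2 / (L₁ + L₂))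
    (α τ : ℕ → ℝ)
    (hα : ∀ n, a ≤ α n ∧ α n ≤ b)
    (hτ : ∀ n, c ≤ τ n ∧ τ n ≤ d)
    (x : ℕ → H₁) (y : ℕ → H₂) (v : ℕ → H₁) (w : ℕ → H₂)
    (hv : ∀ n, v n = x n + τ n • (ContinuousLinearMap.adjoint D₁) (D₂ (y n) - D₁ (x n)))
    (hx : ∀ n, x (n + 1) = α n • x n + (1 - α n) •
      ((1 - η n) • v n + η n • T₁ ((1 - ζ n) • v n + ζ n • T₁ (v n))))
    (hw : ∀ n, w n = y n + τ n • (ContinuousLinearMap.adjoint D₂) (D₁ (x n) - D₂ (y n)))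
    (hy : ∀ n, y (n + 1) = α n • y n + (1 - α n) •
      ((1 - η n) • w n + η n • T₂ ((1 - ζ n) • w n + ζ n • T₂ (w n))))
    (hΓ : ∃ (p : H₁) (q : H₂), T₁ p = p ∧ T₂ q = q ∧ D₁ p = D₂ q) :
    ∃ (xs : H₁) (ys : H₂), T₁ xs = xs ∧ T₂ ys = ys ∧ D₁ xs = D₂ ys ∧
      (∀ z : H₁, Filter.Tendsto (fun n => ⟪x n, z⟫) Filter.atTop (nhds ⟪xs, z⟫)) ∧
      (∀ z : H₂, Filter.Tendsto (fun n => ⟪y n, z⟫) Filter.atTop (nhds ⟪ys, z⟫)) := by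
  -- ## basic scalar facts
  have hs1 : (1:ℝ) ≤ Real.sqrt (1 + L^2) := by
    have h1 : Real.sqrt 1 ≤ Real.sqrt (1 + L^2) := Real.sqrt_le_sqrt (by nlinarith)
    simpa using h1
  have hs2 : Real.sqrt (1 + L^2) ^ 2 = 1 + L^2 := Real.sq_sqrt (by positivity)
  have hζhi0 : 0 < ζhi := lt_of_lt_of_le (lt_trans (lt_of_lt_of_le hηlo (hηζ 0).1) (hηζ 0).2.1) (hηζ 0).2.2
  obtain ⟨δ, hδdef⟩ : ∃ δ : ℝ, δ = 1 - 2*ζhi - ζhi^2*L^2 := ⟨_, rfl⟩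
  have hδ : 0 < δ := by
    have hlt : ζhi * (1 + Real.sqrt (1 + L^2)) < 1 := by
      rw [← lt_div_iff₀ (by positivity)] at *
      exact hζhi
    have h2 : 0 < 1 + ζhi*(Real.sqrt (1 + L^2) - 1) := by nlinarith
    have h3 : 0 < 1 - ζhi*(1 + Real.sqrt (1 + L^2)) := by linarith
    have := mul_pos h3 h2
    nlinarith [hs2]
  have hL₁pos : 0 < L₁ := by
    rw [hL₁]; have : 0 < ‖D₁‖ := norm_pos_iff.mpr hD₁; positivity
  have hL₂pos : 0 < L₂ := by
    rw [hL₂]; have : 0 < ‖D₂‖ := norm_pos_iff.mpr hD₂; positivity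
  have hS12 : 0 < L₁ + L₂ := by linarith
  have hcd : c ≤ d := le_trans (hτ 0).1 (hτ 0).2
  have hdS12 : d * (L₁ + L₂) < 2 := by
    rw [lt_div_iff₀ hS12] at hd; linarith
  obtain ⟨γ, hγdef⟩ : ∃ γ : ℝ, γ = c * (2 - d*(L₁+L₂)) := ⟨_, rfl⟩
  have hγ : 0 < γ := by rw [hγdef]; exact mul_pos hc (by linarith)
  have hγn : ∀ n, γ ≤ τ n * (2 - τ n * (L₁+L₂)) := by
    intro n
    obtain ⟨h1, h2⟩ := hτ n
    have hτ0 : 0 < τ n := lt_of_lt_of_le hc h1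
    calc γ = c*(2-d*(L₁+L₂)) := hγdef
      _ ≤ τ n * (2-d*(L₁+L₂)) := mul_le_mul_of_nonneg_right h1 (by linarith)
      _ ≤ τ n * (2 - τ n * (L₁+L₂)) := by
          apply mul_le_mul_of_nonneg_left _ hτ0.le
          have := mul_le_mul_of_nonneg_right h2 hS12.le
          linarith
  have hab : a ≤ b := le_trans (hα 0).1 (hα 0).2
  have hb1 : (0:ℝ) < 1 - b := by linarith
  obtain ⟨K₀, hK₀def⟩ : ∃ K₀ : ℝ, K₀ = ηlo^2 * δ := ⟨_, rfl⟩
  have hK₀ : 0 < K₀ := by rw [hK₀def]; positivity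
  -- per-n parameter facts
  have hηn0 : ∀ n, 0 < η n := fun n => lt_of_lt_of_le hηlo (hηζ n).1
  have hζn : ∀ n, ζ n < 1 / (1 + Real.sqrt (1 + L ^ 2)) :=
    fun n => lt_of_le_of_lt (hηζ n).2.2 hζhi
  have hcoef : ∀ n, K₀ ≤ η n * ζ n * (1 - 2*ζ n - (ζ n)^2*L^2) := by
    intro n
    obtain ⟨h1, h2, h3⟩ := hηζ n
    have hη0 := hηn0 n
    have hζ0 : 0 < ζ n := lt_trans hη0 h2
    have hδn : δ ≤ 1 - 2*ζ n - (ζ n)^2*L^2 := by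
      rw [hδdef]
      have hsq : (ζ n)^2 ≤ ζhi^2 := pow_le_pow_left₀ hζ0.le h3 2
      have := mul_le_mul_of_nonneg_right hsq (sq_nonneg L)
      linarith
    have hηζlo : ηlo ≤ ζ n := le_trans h1 h2.le
    have hexpr0 : 0 ≤ 1 - 2*ζ n - (ζ n)^2*L^2 := le_trans hδ.le hδn
    calc K₀ = (ηlo*ηlo)*δ := by rw [hK₀def]; ring
      _ ≤ (η n * ζ n)*(1 - 2*ζ n - (ζ n)^2*L^2) :=
          mul_le_mul (mul_le_mul h1 hηζlo hηlo.le hη0.le) hδn hδ.le (by positivity)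
      _ = η n * ζ n * (1 - 2*ζ n - (ζ n)^2*L^2) := by ring
  -- residual quantities
  obtain ⟨e, he⟩ : ∃ e : ℕ → H₃, ∀ n, e n = D₂ (y n) - D₁ (x n) := ⟨_, fun _ => rfl⟩
  obtain ⟨ρ, hρdef⟩ : ∃ ρ : ℕ → ℝ, ∀ n, ρ n = (1-b) * (γ * ‖e n‖^2
      + K₀ * (‖v n - T₁ (v n)‖^2 + ‖w n - T₂ (w n)‖^2)) := ⟨_, fun _ => rfl⟩
  have hρ0 : ∀ n, 0 ≤ ρ n := by
    intro n; rw [hρdef]; positivity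
  -- ## the Fejér-type inequality
  have fejer : ∀ p q, T₁ p = p → T₂ q = q → D₁ p = D₂ q → ∀ n,
      ‖x (n+1) - p‖^2 + ‖y (n+1) - q‖^2 + ρ n ≤ ‖x n - p‖^2 + ‖y n - q‖^2 := by
    intro p q hp hq hpq n
    obtain ⟨hτc, hτd⟩ := hτ n
    have hτ0 : 0 < τ n := lt_of_lt_of_le hc hτc
    obtain ⟨hαa, hαb⟩ := hα n
    have hα0 : 0 < α n := lt_of_lt_of_le ha hαa
    have hα1 : α n ≤ b := hαb
    -- the v/w translation step
    have hv1 : v n - p = (x n - p) + τ n • ((ContinuousLinearMap.adjoint D₁) (e n)) := by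
      rw [hv n, ← he n]; module
    have hv2 : ‖v n - p‖^2 = ‖x n - p‖^2 + 2*(τ n * ⟪D₁ (x n) - D₂ q, e n⟫)
        + (τ n)^2 * ‖(ContinuousLinearMap.adjoint D₁) (e n)‖^2 := by
      rw [hv1, norm_add_sq_real, real_inner_smul_right, norm_smul, Real.norm_eq_abs,
        abs_of_pos hτ0, mul_pow]
      have hip : ⟪x n - p, (ContinuousLinearMap.adjoint D₁) (e n)⟫
          = ⟪D₁ (x n) - D₂ q, e n⟫ := by
        rw [ContinuousLinearMap.adjoint_inner_right, map_sub, hpq]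
      rw [hip]
    have hneg : D₁ (x n) - D₂ (y n) = -(e n) := by rw [he n]; module
    have hw1 : w n - q = (y n - q) + τ n • ((ContinuousLinearMap.adjoint D₂) (-(e n))) := by
      rw [hw n, hneg]; module
    have hw2 : ‖w n - q‖^2 = ‖y n - q‖^2 - 2*(τ n * ⟪D₂ (y n) - D₂ q, e n⟫)
        + (τ n)^2 * ‖(ContinuousLinearMap.adjoint D₂) (e n)‖^2 := by
      rw [hw1, norm_add_sq_real, real_inner_smul_right, norm_smul, Real.norm_eq_abs,
        abs_of_pos hτ0, mul_pow, map_neg, norm_neg]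
      have hip : ⟪y n - q, -((ContinuousLinearMap.adjoint D₂) (e n))⟫
          = -⟪D₂ (y n) - D₂ q, e n⟫ := by
        rw [inner_neg_right, ContinuousLinearMap.adjoint_inner_right, map_sub]
      rw [hip]
      ring
    have hcross : ⟪D₁ (x n) - D₂ q, e n⟫ - ⟪D₂ (y n) - D₂ q, e n⟫ = -‖e n‖^2 := by
      rw [← inner_sub_left, show (D₁ (x n) - D₂ q) - (D₂ (y n) - D₂ q)
        = -(e n) from by rw [he n]; module, inner_neg_left, real_inner_self_eq_norm_sq]
    have hcross2 : τ n * ⟪D₁ (x n) - D₂ q, e n⟫ - τ n * ⟪D₂ (y n) - D₂ q, e n⟫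
        = -(τ n * ‖e n‖^2) := by rw [← mul_sub, hcross]; ring
    have hopb₁ : ‖(ContinuousLinearMap.adjoint D₁) (e n)‖^2 ≤ L₁ * ‖e n‖^2 := by
      have h1 : ‖(ContinuousLinearMap.adjoint D₁) (e n)‖ ≤ ‖D₁‖ * ‖e n‖ := by
        calc ‖(ContinuousLinearMap.adjoint D₁) (e n)‖
            ≤ ‖(ContinuousLinearMap.adjoint D₁)‖ * ‖e n‖ :=
              ContinuousLinearMap.le_opNorm _ _
          _ = ‖D₁‖ * ‖e n‖ := by
              rw [LinearIsometryEquiv.norm_map ContinuousLinearMap.adjoint D₁]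
      rw [hL₁]
      nlinarith [norm_nonneg ((ContinuousLinearMap.adjoint D₁) (e n))]
    have hopb₂ : ‖(ContinuousLinearMap.adjoint D₂) (e n)‖^2 ≤ L₂ * ‖e n‖^2 := by
      have h1 : ‖(ContinuousLinearMap.adjoint D₂) (e n)‖ ≤ ‖D₂‖ * ‖e n‖ := by
        calc ‖(ContinuousLinearMap.adjoint D₂) (e n)‖
            ≤ ‖(ContinuousLinearMap.adjoint D₂)‖ * ‖e n‖ :=
              ContinuousLinearMap.le_opNorm _ _
          _ = ‖D₂‖ * ‖e n‖ := by
              rw [LinearIsometryEquiv.norm_map ContinuousLinearMap.adjoint D₂]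
      rw [hL₂]
      nlinarith [norm_nonneg ((ContinuousLinearMap.adjoint D₂) (e n))]
    have hvw : ‖v n - p‖^2 + ‖w n - q‖^2 ≤ ‖x n - p‖^2 + ‖y n - q‖^2
        - (τ n * (2 - τ n*(L₁+L₂)))*‖e n‖^2 := by
      have hb2 := mul_le_mul_of_nonneg_left hopb₁ (sq_nonneg (τ n))
      have hb3 := mul_le_mul_of_nonneg_left hopb₂ (sq_nonneg (τ n))
      linarith [hv2, hw2, hcross2, hb2, hb3]
    -- the operator contraction step
    obtain ⟨Kx, hKxdef⟩ : ∃ Kx : H₁,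
        Kx = (1 - η n) • v n + η n • T₁ ((1 - ζ n) • v n + ζ n • T₁ (v n)) := ⟨_, rfl⟩
    obtain ⟨Ky, hKydef⟩ : ∃ Ky : H₂,
        Ky = (1 - η n) • w n + η n • T₂ ((1 - ζ n) • w n + ζ n • T₂ (w n)) := ⟨_, rfl⟩
    have hk1' : ‖Kx - p‖^2 ≤ ‖v n - p‖^2 - K₀*‖v n - T₁ (v n)‖^2 := by
      have hk1 := key_op T₁ L hL hT₁lip hT₁qpc (η n) (ζ n) (hηn0 n) (hηζ n).2.1 (hζn n)
        (v n) p hp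
      have h2 : 0 ≤ η n*(ζ n - η n)*‖v n - T₁ ((1 - ζ n) • v n + ζ n • T₁ (v n))‖^2 :=
        mul_nonneg (mul_nonneg (hηn0 n).le (by linarith [(hηζ n).2.1])) (sq_nonneg _)
      have h3 := mul_le_mul_of_nonneg_right (hcoef n) (sq_nonneg ‖v n - T₁ (v n)‖)
      rw [hKxdef]
      linarith [hk1]
    have hk2' : ‖Ky - q‖^2 ≤ ‖w n - q‖^2 - K₀*‖w n - T₂ (w n)‖^2 := by
      have hk2 := key_op T₂ L hL hT₂lip hT₂qpc (η n) (ζ n) (hηn0 n) (hηζ n).2.1 (hζn n)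
        (w n) q hq
      have h2 : 0 ≤ η n*(ζ n - η n)*‖w n - T₂ ((1 - ζ n) • w n + ζ n • T₂ (w n))‖^2 :=
        mul_nonneg (mul_nonneg (hηn0 n).le (by linarith [(hηζ n).2.1])) (sq_nonneg _)
      have h3 := mul_le_mul_of_nonneg_right (hcoef n) (sq_nonneg ‖w n - T₂ (w n)‖)
      rw [hKydef]
      linarith [hk2]
    -- the averaging step
    have hx2 : ‖x (n+1) - p‖^2 = (1-(1-α n))*‖x n - p‖^2 + (1-α n)*‖Kx - p‖^2
        - (1-α n)*(1-(1-α n))*‖x n - Kx‖^2 := by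
      have hid : x (n+1) - p = (1-(1-α n)) • (x n - p) + (1-α n) • (Kx - p) := by
        rw [hx n, ← hKxdef]; module
      rw [hid, norm_combo_sq, show (x n - p) - (Kx - p) = x n - Kx from by module]
    have hy2 : ‖y (n+1) - q‖^2 = (1-(1-α n))*‖y n - q‖^2 + (1-α n)*‖Ky - q‖^2
        - (1-α n)*(1-(1-α n))*‖y n - Ky‖^2 := by
      have hid : y (n+1) - q = (1-(1-α n)) • (y n - q) + (1-α n) • (Ky - q) := by
        rw [hy n, ← hKydef]; module
      rw [hid, norm_combo_sq, show (y n - q) - (Ky - q) = y n - Ky from by module]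
    have hα1' : (0:ℝ) ≤ 1 - α n := by linarith
    have hx3 : ‖x (n+1) - p‖^2 ≤ α n * ‖x n - p‖^2
        + (1-α n)*(‖v n - p‖^2 - K₀*‖v n - T₁ (v n)‖^2) := by
      have h4 := mul_le_mul_of_nonneg_left hk1' hα1'
      have h5 : 0 ≤ (1-α n)*(1-(1-α n))*‖x n - Kx‖^2 :=
        mul_nonneg (mul_nonneg hα1' (by linarith)) (sq_nonneg _)
      linarith [hx2, h4, h5]
    have hy3 : ‖y (n+1) - q‖^2 ≤ α n * ‖y n - q‖^2
        + (1-α n)*(‖w n - q‖^2 - K₀*‖w n - T₂ (w n)‖^2) := by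
      have h4 := mul_le_mul_of_nonneg_left hk2' hα1'
      have h5 : 0 ≤ (1-α n)*(1-(1-α n))*‖y n - Ky‖^2 :=
        mul_nonneg (mul_nonneg hα1' (by linarith)) (sq_nonneg _)
      linarith [hy2, h4, h5]
    -- combine
    have h6 := mul_le_mul_of_nonneg_left hvw hα1'
    have h7 : ρ n ≤ (1-α n)*(τ n*(2-τ n*(L₁+L₂))*‖e n‖^2
        + K₀*(‖v n - T₁ (v n)‖^2 + ‖w n - T₂ (w n)‖^2)) := by
      rw [hρdef]
      apply mul_le_mul (by linarith) ?_ ?_ hα1'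
      · have h8 := mul_le_mul_of_nonneg_right (hγn n) (sq_nonneg ‖e n‖)
        linarith
      · positivity
    linarith [hx3, hy3, h6, h7]
  -- limits of the Lyapunov function for each solution
  have phianti : ∀ p q, T₁ p = p → T₂ q = q → D₁ p = D₂ q →
      Antitone (fun n => ‖x n - p‖^2 + ‖y n - q‖^2) := by
    intro p q hp hq hpq
    apply antitone_nat_of_succ_le
    intro n
    have := fejer p q hp hq hpq n
    have := hρ0 n
    linarith
  have philim : ∀ p q, T₁ p = p → T₂ q = q → D₁ p = D₂ q →
      ∃ l, Tendsto (fun n => ‖x n - p‖^2 + ‖y n - q‖^2) atTop (nhds l) := by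
    intro p q hp hq hpq
    have hanti := phianti p q hp hq hpq
    have hbdd : BddBelow (Set.range (fun n => ‖x n - p‖^2 + ‖y n - q‖^2)) := by
      refine ⟨0, fun r hr => ?_⟩
      obtain ⟨n, rfl⟩ := hr
      positivity
    exact ⟨_, tendsto_atTop_ciInf hanti hbdd⟩
  obtain ⟨p₀, q₀, hp₀, hq₀, hpq₀⟩ := hΓ
  -- ## residuals tend to zero
  have hρto0 : Tendsto ρ atTop (nhds 0) := by
    obtain ⟨l, hl⟩ := philim p₀ q₀ hp₀ hq₀ hpq₀
    have hl1 : Tendsto (fun n => ‖x (n+1) - p₀‖^2 + ‖y (n+1) - q₀‖^2) atTop (nhds l) := by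
      have h := hl.comp (tendsto_add_atTop_nat 1)
      simpa [Function.comp_def] using h
    have hsub := hl.sub hl1
    rw [sub_self] at hsub
    apply squeeze_zero hρ0 (fun n => ?_) hsub
    have := fejer p₀ q₀ hp₀ hq₀ hpq₀ n
    linarith
  have sqlim : ∀ (g : ℕ → ℝ) (K : ℝ), (∀ n, 0 ≤ g n) → 0 < K →
      (∀ n, (1-b) * (K * (g n)^2) ≤ ρ n) →
      Tendsto g atTop (nhds 0) := by
    intro g K hg0 hK hle
    have hpos : 0 < (1-b)*K := mul_pos hb1 hK
    have h2 : Tendsto (fun n => (g n)^2) atTop (nhds 0) := by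
      have hdiv : Tendsto (fun n => ρ n / ((1-b)*K)) atTop (nhds 0) := by
        simpa using hρto0.div_const ((1-b)*K)
      apply squeeze_zero (fun n => sq_nonneg _) (fun n => ?_) hdiv
      rw [le_div_iff₀ hpos]
      have := hle n
      nlinarith [hle n]
    have h3 := h2.sqrt
    rw [Real.sqrt_zero] at h3
    exact h3.congr (fun n => Real.sqrt_sq (hg0 n))
  have hE : Tendsto (fun n => ‖e n‖) atTop (nhds 0) := by
    apply sqlim (fun n => ‖e n‖) γ (fun n => norm_nonneg _) hγ
    intro n
    rw [hρdef]
    have h1 : 0 ≤ K₀ * (‖v n - T₁ (v n)‖^2 + ‖w n - T₂ (w n)‖^2) := by positivity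
    apply mul_le_mul_of_nonneg_left _ hb1.le
    linarith
  have hrv : Tendsto (fun n => ‖v n - T₁ (v n)‖) atTop (nhds 0) := by
    apply sqlim (fun n => ‖v n - T₁ (v n)‖) K₀ (fun n => norm_nonneg _) hK₀
    intro n
    rw [hρdef]
    have h1 : 0 ≤ γ * ‖e n‖^2 := by positivity
    have h2 : 0 ≤ K₀ * ‖w n - T₂ (w n)‖^2 := by positivity
    apply mul_le_mul_of_nonneg_left _ hb1.le
    have h3 : K₀ * (‖v n - T₁ (v n)‖^2 + ‖w n - T₂ (w n)‖^2)
        = K₀ * ‖v n - T₁ (v n)‖^2 + K₀ * ‖w n - T₂ (w n)‖^2 := by ring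
    linarith
  have hrw : Tendsto (fun n => ‖w n - T₂ (w n)‖) atTop (nhds 0) := by
    apply sqlim (fun n => ‖w n - T₂ (w n)‖) K₀ (fun n => norm_nonneg _) hK₀
    intro n
    rw [hρdef]
    have h1 : 0 ≤ γ * ‖e n‖^2 := by positivity
    have h2 : 0 ≤ K₀ * ‖v n - T₁ (v n)‖^2 := by positivity
    apply mul_le_mul_of_nonneg_left _ hb1.le
    have h3 : K₀ * (‖v n - T₁ (v n)‖^2 + ‖w n - T₂ (w n)‖^2)
        = K₀ * ‖v n - T₁ (v n)‖^2 + K₀ * ‖w n - T₂ (w n)‖^2 := by ring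
    linarith
  -- x n - v n → 0 and x n - T₁ x n → 0, similarly for y
  have hadj₁ : ‖(ContinuousLinearMap.adjoint D₁)‖ = ‖D₁‖ :=
    LinearIsometryEquiv.norm_map ContinuousLinearMap.adjoint D₁
  have hadj₂ : ‖(ContinuousLinearMap.adjoint D₂)‖ = ‖D₂‖ :=
    LinearIsometryEquiv.norm_map ContinuousLinearMap.adjoint D₂
  have hxv : Tendsto (fun n => ‖x n - v n‖) atTop (nhds 0) := by
    apply squeeze_zero (fun n => norm_nonneg _) (fun n => ?_)
      (by simpa using hE.const_mul (d * ‖D₁‖))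
    have hid : x n - v n = (-(τ n)) • (ContinuousLinearMap.adjoint D₁) (e n) := by
      rw [hv n, ← he n]; module
    rw [hid, norm_smul, Real.norm_eq_abs, abs_neg,
      abs_of_pos (lt_of_lt_of_le hc (hτ n).1)]
    have h1 : ‖(ContinuousLinearMap.adjoint D₁) (e n)‖ ≤ ‖D₁‖ * ‖e n‖ := by
      calc ‖(ContinuousLinearMap.adjoint D₁) (e n)‖
          ≤ ‖(ContinuousLinearMap.adjoint D₁)‖ * ‖e n‖ :=
            ContinuousLinearMap.le_opNorm _ _
        _ = ‖D₁‖ * ‖e n‖ := by rw [hadj₁]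
    calc τ n * ‖(ContinuousLinearMap.adjoint D₁) (e n)‖
        ≤ d * (‖D₁‖ * ‖e n‖) := by
          apply mul_le_mul (hτ n).2 h1 (norm_nonneg _) (le_trans hc.le hcd)
      _ = d * ‖D₁‖ * ‖e n‖ := by ring
  have hyw : Tendsto (fun n => ‖y n - w n‖) atTop (nhds 0) := by
    apply squeeze_zero (fun n => norm_nonneg _) (fun n => ?_)
      (by simpa using hE.const_mul (d * ‖D₂‖))
    have hid : y n - w n = (τ n) • (ContinuousLinearMap.adjoint D₂) (e n) := by
      have h0 : D₁ (x n) - D₂ (y n) = -(e n) := by rw [he n]; module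
      rw [hw n, h0, map_neg]
      module
    rw [hid, norm_smul, Real.norm_eq_abs,
      abs_of_pos (lt_of_lt_of_le hc (hτ n).1)]
    have h1 : ‖(ContinuousLinearMap.adjoint D₂) (e n)‖ ≤ ‖D₂‖ * ‖e n‖ := by
      calc ‖(ContinuousLinearMap.adjoint D₂) (e n)‖
          ≤ ‖(ContinuousLinearMap.adjoint D₂)‖ * ‖e n‖ :=
            ContinuousLinearMap.le_opNorm _ _
        _ = ‖D₂‖ * ‖e n‖ := by rw [hadj₂]
    calc τ n * ‖(ContinuousLinearMap.adjoint D₂) (e n)‖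
        ≤ d * (‖D₂‖ * ‖e n‖) := by
          apply mul_le_mul (hτ n).2 h1 (norm_nonneg _) (le_trans hc.le hcd)
      _ = d * ‖D₂‖ * ‖e n‖ := by ring
  have hxT : Tendsto (fun n => ‖x n - T₁ (x n)‖) atTop (nhds 0) := by
    apply squeeze_zero (fun n => norm_nonneg _) (fun n => ?_)
      (by simpa using (hxv.const_mul (1+L)).add hrv)
    have hid : x n - T₁ (x n) = (x n - v n) + (v n - T₁ (v n)) + (T₁ (v n) - T₁ (x n)) := by
      module
    rw [hid]
    have h1 := norm_add₃_le (a := x n - v n) (b := v n - T₁ (v n)) (c := T₁ (v n) - T₁ (x n))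
    have h2 : ‖T₁ (v n) - T₁ (x n)‖ ≤ L * ‖x n - v n‖ := by
      calc ‖T₁ (v n) - T₁ (x n)‖ ≤ L * ‖v n - x n‖ := hT₁lip _ _
        _ = L * ‖x n - v n‖ := by rw [norm_sub_rev]
    linarith
  have hyT : Tendsto (fun n => ‖y n - T₂ (y n)‖) atTop (nhds 0) := by
    apply squeeze_zero (fun n => norm_nonneg _) (fun n => ?_)
      (by simpa using (hyw.const_mul (1+L)).add hrw)
    have hid : y n - T₂ (y n) = (y n - w n) + (w n - T₂ (w n)) + (T₂ (w n) - T₂ (y n)) := by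
      module
    rw [hid]
    have h1 := norm_add₃_le (a := y n - w n) (b := w n - T₂ (w n)) (c := T₂ (w n) - T₂ (y n))
    have h2 : ‖T₂ (w n) - T₂ (y n)‖ ≤ L * ‖y n - w n‖ := by
      calc ‖T₂ (w n) - T₂ (y n)‖ ≤ L * ‖w n - y n‖ := hT₂lip _ _
        _ = L * ‖y n - w n‖ := by rw [norm_sub_rev]
    linarith
  -- ## boundedness
  have hΦ0 : ∀ n, ‖x n - p₀‖^2 + ‖y n - q₀‖^2 ≤ ‖x 0 - p₀‖^2 + ‖y 0 - q₀‖^2 :=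
    fun n => phianti p₀ q₀ hp₀ hq₀ hpq₀ (Nat.zero_le n)
  obtain ⟨Rx, hRx⟩ : ∃ R, ∀ n, ‖x n‖ ≤ R := by
    refine ⟨Real.sqrt (‖x 0 - p₀‖^2 + ‖y 0 - q₀‖^2) + ‖p₀‖, fun n => ?_⟩
    have h1 : ‖x n - p₀‖ ≤ Real.sqrt (‖x 0 - p₀‖^2 + ‖y 0 - q₀‖^2) := by
      rw [Real.le_sqrt (norm_nonneg _)]
      have := hΦ0 n
      nlinarith [sq_nonneg ‖y n - q₀‖]
      positivity
    calc ‖x n‖ = ‖(x n - p₀) + p₀‖ := by rw [sub_add_cancel]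
      _ ≤ ‖x n - p₀‖ + ‖p₀‖ := norm_add_le _ _
      _ ≤ _ := by linarith
  obtain ⟨Ry, hRy⟩ : ∃ R, ∀ n, ‖y n‖ ≤ R := by
    refine ⟨Real.sqrt (‖x 0 - p₀‖^2 + ‖y 0 - q₀‖^2) + ‖q₀‖, fun n => ?_⟩
    have h1 : ‖y n - q₀‖ ≤ Real.sqrt (‖x 0 - p₀‖^2 + ‖y 0 - q₀‖^2) := by
      rw [Real.le_sqrt (norm_nonneg _)]
      have := hΦ0 n
      nlinarith [sq_nonneg ‖x n - p₀‖]
      positivity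
    calc ‖y n‖ = ‖(y n - q₀) + q₀‖ := by rw [sub_add_cancel]
      _ ≤ ‖y n - q₀‖ + ‖q₀‖ := norm_add_le _ _
      _ ≤ _ := by linarith
  -- ## cluster point extraction
  have ext : ∀ ψ : ℕ → ℕ, StrictMono ψ → ∃ θ : ℕ → ℕ, StrictMono θ ∧ ∃ p q,
      T₁ p = p ∧ T₂ q = q ∧ D₁ p = D₂ q ∧
      (∀ h, Tendsto (fun n => ⟪x (ψ (θ n)), h⟫) atTop (nhds ⟪p, h⟫)) ∧
      (∀ h, Tendsto (fun n => ⟪y (ψ (θ n)), h⟫) atTop (nhds ⟪q, h⟫)) := by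
    intro ψ hψ
    obtain ⟨φ₁, hφ₁, z₁, hz₁⟩ := weak_seq_compact (fun n => x (ψ n)) Rx (fun n => hRx _)
    obtain ⟨φ₂, hφ₂, z₂, hz₂⟩ := weak_seq_compact (fun n => y (ψ (φ₁ n))) Ry (fun n => hRy _)
    have hxw : ∀ h, Tendsto (fun n => ⟪x (ψ (φ₁ (φ₂ n))), h⟫) atTop (nhds ⟪z₁, h⟫) := by
      intro h
      have := (hz₁ h).comp hφ₂.tendsto_atTop
      simpa [Function.comp_def] using this
    have hyw' : ∀ h, Tendsto (fun n => ⟪y (ψ (φ₁ (φ₂ n))), h⟫) atTop (nhds ⟪z₂, h⟫) :=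
      fun h => hz₂ h
    have hθall : StrictMono (fun n => ψ (φ₁ (φ₂ n))) := hψ.comp (hφ₁.comp hφ₂)
    have hidx : Tendsto (fun n => ψ (φ₁ (φ₂ n))) atTop atTop := hθall.tendsto_atTop
    have hfix₁ : T₁ z₁ = z₁ := by
      apply hT₁dem (fun n => x (ψ (φ₁ (φ₂ n)))) z₁ hxw
      have := hxT.comp hidx
      simpa [Function.comp_def] using this
    have hfix₂ : T₂ z₂ = z₂ := by
      apply hT₂dem (fun n => y (ψ (φ₁ (φ₂ n)))) z₂ hyw'
      have := hyT.comp hidx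
      simpa [Function.comp_def] using this
    have heq : D₁ z₁ = D₂ z₂ := by
      have hlim1 : ∀ h : H₃, Tendsto (fun n => ⟪e (ψ (φ₁ (φ₂ n))), h⟫) atTop
          (nhds ⟪D₂ z₂ - D₁ z₁, h⟫) := by
        intro h
        have h1 : ∀ m, ⟪e m, h⟫ = ⟪y m, (ContinuousLinearMap.adjoint D₂) h⟫
            - ⟪x m, (ContinuousLinearMap.adjoint D₁) h⟫ := by
          intro m
          rw [he m, inner_sub_left,
            ← ContinuousLinearMap.adjoint_inner_right D₂,
            ← ContinuousLinearMap.adjoint_inner_right D₁]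
        have h2 := (hyw' ((ContinuousLinearMap.adjoint D₂) h)).sub
          (hxw ((ContinuousLinearMap.adjoint D₁) h))
        have h3 : ⟪z₂, (ContinuousLinearMap.adjoint D₂) h⟫
            - ⟪z₁, (ContinuousLinearMap.adjoint D₁) h⟫ = ⟪D₂ z₂ - D₁ z₁, h⟫ := by
          rw [inner_sub_left, ContinuousLinearMap.adjoint_inner_right,
            ContinuousLinearMap.adjoint_inner_right]
        rw [h3] at h2
        exact h2.congr (fun n => (h1 _).symm)
      have hlim0 : ∀ h : H₃, Tendsto (fun n => ⟪e (ψ (φ₁ (φ₂ n))), h⟫) atTop (nhds 0) := by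
        intro h
        refine squeeze_zero_norm (a := fun n => ‖e (ψ (φ₁ (φ₂ n)))‖ * ‖h‖)
          (fun n => abs_real_inner_le_norm _ _) ?_
        have := (hE.comp hidx).mul_const ‖h‖
        simpa [Function.comp] using this
      have hzero : ∀ h : H₃, ⟪D₂ z₂ - D₁ z₁, h⟫ = 0 := fun h =>
        tendsto_nhds_unique (hlim1 h) (hlim0 h)
      have := hzero (D₂ z₂ - D₁ z₁)
      rw [inner_self_eq_zero] at this
      rw [sub_eq_zero] at this
      exact this.symm
    exact ⟨φ₁ ∘ φ₂, hφ₁.comp hφ₂, z₁, z₂, hfix₁, hfix₂, heq, hxw, hyw'⟩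
  -- ## Opial-type uniqueness of weak cluster points
  have opial : ∀ (φa φb : ℕ → ℕ), StrictMono φa → StrictMono φb →
      ∀ p₁ q₁ p₂ q₂, T₁ p₁ = p₁ → T₂ q₁ = q₁ → D₁ p₁ = D₂ q₁ →
      T₁ p₂ = p₂ → T₂ q₂ = q₂ → D₁ p₂ = D₂ q₂ →
      (∀ h, Tendsto (fun n => ⟪x (φa n), h⟫) atTop (nhds ⟪p₁, h⟫)) →
      (∀ h, Tendsto (fun n => ⟪y (φa n), h⟫) atTop (nhds ⟪q₁, h⟫)) →
      (∀ h, Tendsto (fun n => ⟪x (φb n), h⟫) atTop (nhds ⟪p₂, h⟫)) →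
      (∀ h, Tendsto (fun n => ⟪y (φb n), h⟫) atTop (nhds ⟪q₂, h⟫)) →
      p₁ = p₂ ∧ q₁ = q₂ := by
    intro φa φb hφa hφb p₁ q₁ p₂ q₂ hp₁ hq₁ hpq₁ hp₂ hq₂ hpq₂ hxa hya hxb hyb
    obtain ⟨l₁, hl₁⟩ := philim p₁ q₁ hp₁ hq₁ hpq₁
    obtain ⟨l₂, hl₂⟩ := philim p₂ q₂ hp₂ hq₂ hpq₂
    obtain ⟨Cc, hCc⟩ : ∃ Cc : ℝ, Cc = ‖p₂‖^2 - ‖p₁‖^2 + ‖q₂‖^2 - ‖q₁‖^2 := ⟨_, rfl⟩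
    have hS : Tendsto (fun n => ⟪x n, p₁ - p₂⟫ + ⟪y n, q₁ - q₂⟫) atTop
        (nhds ((l₂ - l₁ - Cc)/2)) := by
      have hid : ∀ n, ⟪x n, p₁ - p₂⟫ + ⟪y n, q₁ - q₂⟫
          = ((‖x n - p₂‖^2 + ‖y n - q₂‖^2) - (‖x n - p₁‖^2 + ‖y n - q₁‖^2) - Cc)/2 := by
        intro n
        have e1 : ‖x n - p₁‖^2 = ‖x n‖^2 - 2*⟪x n, p₁⟫ + ‖p₁‖^2 := norm_sub_sq_real _ _
        have e2 : ‖x n - p₂‖^2 = ‖x n‖^2 - 2*⟪x n, p₂⟫ + ‖p₂‖^2 := norm_sub_sq_real _ _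
        have e3 : ‖y n - q₁‖^2 = ‖y n‖^2 - 2*⟪y n, q₁⟫ + ‖q₁‖^2 := norm_sub_sq_real _ _
        have e4 : ‖y n - q₂‖^2 = ‖y n‖^2 - 2*⟪y n, q₂⟫ + ‖q₂‖^2 := norm_sub_sq_real _ _
        rw [inner_sub_right, inner_sub_right, e1, e2, e3, e4, hCc]
        ring
      have h0 := ((hl₂.sub hl₁).sub_const Cc).div_const 2
      exact h0.congr (fun n => (hid n).symm)
    have hSa : Tendsto (fun n => ⟪x (φa n), p₁ - p₂⟫ + ⟪y (φa n), q₁ - q₂⟫) atTop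
        (nhds ((l₂ - l₁ - Cc)/2)) := by
      have := hS.comp hφa.tendsto_atTop
      simpa [Function.comp_def] using this
    have hSb : Tendsto (fun n => ⟪x (φb n), p₁ - p₂⟫ + ⟪y (φb n), q₁ - q₂⟫) atTop
        (nhds ((l₂ - l₁ - Cc)/2)) := by
      have := hS.comp hφb.tendsto_atTop
      simpa [Function.comp_def] using this
    have hva : ⟪p₁, p₁ - p₂⟫ + ⟪q₁, q₁ - q₂⟫ = (l₂ - l₁ - Cc)/2 :=
      tendsto_nhds_unique ((hxa (p₁ - p₂)).add (hya (q₁ - q₂))) hSa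
    have hvb : ⟪p₂, p₁ - p₂⟫ + ⟪q₂, q₁ - q₂⟫ = (l₂ - l₁ - Cc)/2 :=
      tendsto_nhds_unique ((hxb (p₁ - p₂)).add (hyb (q₁ - q₂))) hSb
    have hkey : ⟪p₁ - p₂, p₁ - p₂⟫ + ⟪q₁ - q₂, q₁ - q₂⟫ = 0 := by
      rw [inner_sub_left, inner_sub_left]
      linarith
    have h1 : (0:ℝ) ≤ ⟪p₁ - p₂, p₁ - p₂⟫ := real_inner_self_nonneg
    have h2 : (0:ℝ) ≤ ⟪q₁ - q₂, q₁ - q₂⟫ := real_inner_self_nonneg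
    have hz1 : ⟪p₁ - p₂, p₁ - p₂⟫ = 0 := by linarith
    have hz2 : ⟪q₁ - q₂, q₁ - q₂⟫ = 0 := by linarith
    rw [inner_self_eq_zero, sub_eq_zero] at hz1 hz2
    exact ⟨hz1, hz2⟩
  -- ## conclusion
  obtain ⟨θ, hθ, z₁, z₂, hz₁fix, hz₂fix, hz₁₂, hzx, hzy⟩ := ext id strictMono_id
  refine ⟨z₁, z₂, hz₁fix, hz₂fix, hz₁₂, ?_, ?_⟩
  · intro h
    by_contra hcon
    rw [Metric.tendsto_atTop] at hcon
    push_neg at hcon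
    obtain ⟨ε, hε, hfreq⟩ := hcon
    obtain ⟨ψ, hψ, hψprop⟩ := extraction_of_frequently_atTop
      (frequently_atTop.mpr fun N => (hfreq N).imp (fun n hn => ⟨hn.1, hn.2⟩))
    obtain ⟨θ', hθ', p₂, q₂, hp₂, hq₂, hpq₂, hxb, hyb⟩ := ext ψ hψ
    obtain ⟨hz1, hz2⟩ := opial (fun n => id (θ n)) (fun n => ψ (θ' n))
      (strictMono_id.comp hθ) (hψ.comp hθ') z₁ z₂ p₂ q₂
      hz₁fix hz₂fix hz₁₂ hp₂ hq₂ hpq₂ hzx hzy hxb hyb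
    have hlim := hxb h
    rw [← hz1] at hlim
    rw [Metric.tendsto_atTop] at hlim
    obtain ⟨N, hN⟩ := hlim ε hε
    exact absurd (hN N le_rfl) (not_lt.mpr (hψprop (θ' N)))
  · intro h
    by_contra hcon
    rw [Metric.tendsto_atTop] at hcon
    push_neg at hcon
    obtain ⟨ε, hε, hfreq⟩ := hcon
    obtain ⟨ψ, hψ, hψprop⟩ := extraction_of_frequently_atTop
      (frequently_atTop.mpr fun N => (hfreq N).imp (fun n hn => ⟨hn.1, hn.2⟩))
    obtain ⟨θ', hθ', p₂, q₂, hp₂, hq₂, hpq₂, hxb, hyb⟩ := ext ψ hψ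
    obtain ⟨hz1, hz2⟩ := opial (fun n => id (θ n)) (fun n => ψ (θ' n))
      (strictMono_id.comp hθ) (hψ.comp hθ') z₁ z₂ p₂ q₂
      hz₁fix hz₂fix hz₁₂ hp₂ hq₂ hpq₂ hzx hzy hxb hyb
    have hlim := hyb h
    rw [← hz2] at hlim
    rw [Metric.tendsto_atTop] at hlim
    obtain ⟨N, hN⟩ := hlim ε hε
    exact absurd (hN N le_rfl) (not_lt.mpr (hψprop (θ' N)))
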